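/- arXiv:2410.08897 — 3 statements merged into one kernel-verified Lean document; each statement's English description precedes it below -/
import Mathlib

section
/- Let A(w,z) = Σ_{d≥0} A_d(w)·z^d ∈ (ℚ[[w]])[[z]], and let θ be the ℚ[[w]]-linear operator on (ℚ[[w]])[[z]] defined by θ(F) = w·F + z·(∂F/∂z), where ∂/∂z is the formal derivative in z. Then θ⁴A − 9·z·(3θ+1)²(3θ+2)²A = w⁴ in (ℚ[[w]])[[z]]; equivalently, the formal series R(w,t) = e^{wt}·Σ_{d≥0} A_d(w)·e^{dt} satisfies the Picard–Fuchs type equation (d/dt)⁴R − 3⁶·e^t·((d/dt)+1/3)²((d/dt)+2/3)²R = e^{wt}·w⁴. -/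
open PowerSeries

/-- `A_d(w) = (∏_{r=1}^{3d} (3w+r))² · ((∏_{r=1}^{d} (w+r))⁶)⁻¹ ∈ ℚ[[w]]`. -/
noncomputable def Acoef (d : ℕ) : PowerSeries ℚ :=
  (∏ r ∈ Finset.Icc 1 (3 * d), (3 * PowerSeries.X + (r : PowerSeries ℚ))) ^ 2 *
    ((∏ r ∈ Finset.Icc 1 d, (PowerSeries.X + (r : PowerSeries ℚ))) ^ 6)⁻¹

/-- `A(w,z) = Σ_{d≥0} A_d(w)·z^d ∈ (ℚ[[w]])[[z]]`. -/
noncomputable def Aseries : PowerSeries (PowerSeries ℚ) :=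
  PowerSeries.mk fun d => Acoef d

/-- The operator `θ(F) = w·F + z·∂F/∂z` on `(ℚ[[w]])[[z]]`. -/
noncomputable def thetaOp (F : PowerSeries (PowerSeries ℚ)) : PowerSeries (PowerSeries ℚ) :=
  PowerSeries.C (R := PowerSeries ℚ) PowerSeries.X * F + PowerSeries.X * PowerSeries.derivativeFun F

/-- The operator `3θ + 1`. -/
noncomputable def L1 (F : PowerSeries (PowerSeries ℚ)) : PowerSeries (PowerSeries ℚ) :=
  3 * thetaOp F + F

/-- The operator `3θ + 2`. -/
noncomputable def L2 (F : PowerSeries (PowerSeries ℚ)) : PowerSeries (PowerSeries ℚ) :=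
  3 * thetaOp F + 2 * F

lemma coeff_thetaOp (F : PowerSeries (PowerSeries ℚ)) (d : ℕ) :
    PowerSeries.coeff d (thetaOp F)
      = (PowerSeries.X + (d : PowerSeries ℚ)) * PowerSeries.coeff d F := by
  unfold thetaOp
  rw [map_add, coeff_C_mul]
  cases d with
  | zero => simp
  | succ n =>
    rw [coeff_succ_X_mul, show F.derivativeFun = derivative _ F from rfl, coeff_derivative]
    push_cast
    ring

lemma coeff_L1 (F : PowerSeries (PowerSeries ℚ)) (d : ℕ) :
    PowerSeries.coeff d (L1 F)
      = (3 * (PowerSeries.X + (d : PowerSeries ℚ)) + 1) * PowerSeries.coeff d F := by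
  unfold L1
  rw [map_add, ← map_ofNat (PowerSeries.C (R := PowerSeries ℚ)) 3, coeff_C_mul, coeff_thetaOp]
  ring

lemma coeff_L2 (F : PowerSeries (PowerSeries ℚ)) (d : ℕ) :
    PowerSeries.coeff d (L2 F)
      = (3 * (PowerSeries.X + (d : PowerSeries ℚ)) + 2) * PowerSeries.coeff d F := by
  unfold L2
  rw [map_add, ← map_ofNat (PowerSeries.C (R := PowerSeries ℚ)) 3,
    ← map_ofNat (PowerSeries.C (R := PowerSeries ℚ)) 2, coeff_C_mul, coeff_C_mul, coeff_thetaOp]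
  ring

lemma Acoef_zero : Acoef 0 = 1 := by
  simp [Acoef, inv_one]

lemma Acoef_rec (n : ℕ) :
    (PowerSeries.X + ((n : PowerSeries ℚ) + 1)) ^ 4 * Acoef (n + 1)
      = 9 * (3 * PowerSeries.X + (3 * (n : PowerSeries ℚ) + 1)) ^ 2
          * (3 * PowerSeries.X + (3 * (n : PowerSeries ℚ) + 2)) ^ 2 * Acoef n := by
  set s : PowerSeries ℚ := PowerSeries.X + ((n : PowerSeries ℚ) + 1) with hs_def
  have hs : (s ^ 6)⁻¹ * s ^ 6 = 1 := by
    refine PowerSeries.inv_mul_cancel _ ?_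
    have : PowerSeries.constantCoeff (R := ℚ) s = (n : ℚ) + 1 := by
      simp [hs_def]
    rw [map_pow, this]
    positivity
  have h1 : (∏ r ∈ Finset.Icc 1 (3 * (n + 1)), (3 * PowerSeries.X + (r : PowerSeries ℚ)))
      = (∏ r ∈ Finset.Icc 1 (3 * n), (3 * PowerSeries.X + (r : PowerSeries ℚ)))
        * ((3 * PowerSeries.X + (3 * (n : PowerSeries ℚ) + 1))
          * (3 * PowerSeries.X + (3 * (n : PowerSeries ℚ) + 2)) * (3 * s)) := by
    have e : 3 * (n + 1) = 3 * n + 1 + 1 + 1 := by ring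
    rw [e, Finset.prod_Icc_succ_top (by omega), Finset.prod_Icc_succ_top (by omega),
      Finset.prod_Icc_succ_top (by omega)]
    push_cast
    ring
  have h2 : (∏ r ∈ Finset.Icc 1 (n + 1), (PowerSeries.X + (r : PowerSeries ℚ)))
      = (∏ r ∈ Finset.Icc 1 n, (PowerSeries.X + (r : PowerSeries ℚ))) * s := by
    rw [Finset.prod_Icc_succ_top (by omega)]
    push_cast
    ring
  unfold Acoef
  rw [h1, h2, mul_pow (∏ r ∈ Finset.Icc 1 n, (PowerSeries.X + (r : PowerSeries ℚ))) s 6,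
    PowerSeries.mul_inv_rev]
  linear_combination (9 * (3 * PowerSeries.X + (3 * (n : PowerSeries ℚ) + 1)) ^ 2
    * (3 * PowerSeries.X + (3 * (n : PowerSeries ℚ) + 2)) ^ 2
    * (∏ r ∈ Finset.Icc 1 (3 * n), (3 * PowerSeries.X + (r : PowerSeries ℚ))) ^ 2
    * ((∏ r ∈ Finset.Icc 1 n, (PowerSeries.X + (r : PowerSeries ℚ))) ^ 6)⁻¹) * hs

/-- The Picard–Fuchs type equation `θ⁴A − 9·z·(3θ+1)²(3θ+2)²A = w⁴` in `(ℚ[[w]])[[z]]`,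
equivalently `(d/dt)⁴R − 3⁶·e^t·((d/dt)+1/3)²((d/dt)+2/3)²R = e^{wt}·w⁴` for
`R(w,t) = e^{wt}·Σ_{d≥0} A_d(w)·e^{dt}`. -/
theorem picard_fuchs_formal :
    thetaOp (thetaOp (thetaOp (thetaOp Aseries))) -
      9 * PowerSeries.X * (L1 (L1 (L2 (L2 Aseries)))) =
    PowerSeries.C (R := PowerSeries ℚ) (PowerSeries.X ^ 4) := by
  apply PowerSeries.ext
  intro d
  rw [map_sub, mul_assoc, ← map_ofNat (PowerSeries.C (R := PowerSeries ℚ)) 9, coeff_C_mul,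
    coeff_thetaOp, coeff_thetaOp, coeff_thetaOp, coeff_thetaOp, PowerSeries.coeff_C]
  cases d with
  | zero =>
    simp only [Nat.cast_zero, if_true, PowerSeries.coeff_zero_X_mul, Aseries,
      PowerSeries.coeff_mk, Acoef_zero, map_ofNat]
    ring
  | succ n =>
    rw [PowerSeries.coeff_succ_X_mul, coeff_L1, coeff_L1, coeff_L2, coeff_L2]
    simp only [Aseries, PowerSeries.coeff_mk]
    rw [if_neg (Nat.succ_ne_zero n), sub_eq_zero]
    push_cast
    linear_combination Acoef_rec n
end

section
/- The recursion defining I_{p,q} is well-defined for all 0 ≤ p ≤ q ≤ 4, and for every 0 ≤ p ≤ 4 the diagonal element I_{p,p} lies in the subring ℚ[[z]] ⊆ S (i.e. it contains no positive powers of t) and has constant coefficient 1; in particular each I_{p,p} is a unit of S, so every division occurring in the recursion is legitimate. -/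
/-- `Ĩ_q ∈ ℚ[[z]]`: the coefficient of `z^d` is the coefficient of `w^q` in `A_d(w)`. -/
noncomputable def Itil (q : ℕ) : PowerSeries ℚ :=
  PowerSeries.mk fun d => PowerSeries.coeff q (Acoef d)

/-- `S = (ℚ[[z]])[t]`. -/
abbrev S : Type := Polynomial (PowerSeries ℚ)

/-- The operator `z·∂/∂z` on `ℚ[[z]]`. -/
noncomputable def zdz (f : PowerSeries ℚ) : PowerSeries ℚ :=
  PowerSeries.mk fun n => (n : ℚ) * PowerSeries.coeff n f

/-- The derivation `δ = ∂/∂t + z·∂/∂z` on `S = (ℚ[[z]])[t]`, determined by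
`δ(t) = 1` and `δ(z) = z`. -/
noncomputable def deltaOp (p : S) : S :=
  Polynomial.derivative p + p.sum fun n a => Polynomial.C (zdz a) * Polynomial.X ^ n

/-- `I_{0,q} = Σ_{k=0}^{q} (t^k/k!)·Ĩ_{q−k} ∈ S`. -/
noncomputable def I0S (q : ℕ) : S :=
  ∑ k ∈ Finset.range (q + 1),
    Polynomial.C (PowerSeries.C (1 / (k.factorial : ℚ)) * Itil (q - k)) * Polynomial.X ^ k

/-- The recursion `I_{p,q} = δ(I_{p−1,q} · I_{p−1,p−1}⁻¹)`, where the inverse of the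
(constant, unit) polynomial `I_{p−1,p−1}` is taken via the power series inverse of its
constant coefficient. -/
noncomputable def IPQ : ℕ → ℕ → S
  | 0 => I0S
  | p + 1 => fun q => deltaOp (IPQ p q * Polynomial.C (((IPQ p p).coeff 0)⁻¹))

lemma zdz_coeff (f : PowerSeries ℚ) (n : ℕ) :
    PowerSeries.coeff n (zdz f) = (n : ℚ) * PowerSeries.coeff n f := by
  simp [zdz]

lemma zdz_C_mul (c : ℚ) (f : PowerSeries ℚ) :
    zdz (PowerSeries.C c * f) = PowerSeries.C c * zdz f := by
  ext n
  simp [zdz_coeff]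
  ring

lemma zdz_one : zdz (1 : PowerSeries ℚ) = 0 := by
  ext n
  simp [zdz_coeff, PowerSeries.coeff_one]

lemma zdz_zero : zdz (0 : PowerSeries ℚ) = 0 := by
  ext n; simp [zdz_coeff]

lemma deltaOp_coeff (P : S) (k : ℕ) :
    (deltaOp P).coeff k = P.coeff (k + 1) * ((k : PowerSeries ℚ) + 1) + zdz (P.coeff k) := by
  unfold deltaOp
  rw [Polynomial.coeff_add, Polynomial.coeff_derivative]
  congr 1
  rw [Polynomial.sum_def, Polynomial.finset_sum_coeff]
  simp only [Polynomial.coeff_C_mul, Polynomial.coeff_X_pow]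
  rw [Finset.sum_congr rfl (fun n _ => by rw [mul_ite, mul_one, mul_zero])]
  rw [Finset.sum_ite_eq P.support k (fun n => zdz (P.coeff n))]
  by_cases h : k ∈ P.support
  · simp [h]
  · simp only [h, if_false]
    rw [Polynomial.notMem_support_iff.mp h, zdz_zero]

noncomputable def Jaux : ℕ → ℕ → PowerSeries ℚ
  | 0, j => Itil j
  | p + 1, j => Jaux p j * (Jaux p 0)⁻¹ + zdz (Jaux p (j + 1) * (Jaux p 0)⁻¹)

lemma Itil_zero_constantCoeff : PowerSeries.constantCoeff (Itil 0) = 1 := by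
  have : Acoef 0 = 1 := by
    simp [Acoef]
  simp [Itil, PowerSeries.constantCoeff_mk, this]

lemma Jaux_constantCoeff (p : ℕ) : PowerSeries.constantCoeff (Jaux p 0) = 1 := by
  induction p with
  | zero => exact Itil_zero_constantCoeff
  | succ p ih =>
    have h0 : PowerSeries.constantCoeff (zdz (Jaux p 1 * (Jaux p 0)⁻¹)) = 0 := by
      have := zdz_coeff (Jaux p 1 * (Jaux p 0)⁻¹) 0
      simpa using this
    simp [Jaux, map_mul, PowerSeries.constantCoeff_inv, ih, h0]

lemma Jaux_mul_inv (p : ℕ) : Jaux p 0 * (Jaux p 0)⁻¹ = 1 :=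
  PowerSeries.mul_inv_cancel _ (by rw [Jaux_constantCoeff]; norm_num)

lemma fact_helper (k : ℕ) (f : PowerSeries ℚ) :
    PowerSeries.C (1 / (((k + 1).factorial : ℚ))) * f * ((k : PowerSeries ℚ) + 1)
      = PowerSeries.C (1 / ((k.factorial : ℚ))) * f := by
  have h : ((k : PowerSeries ℚ) + 1) = PowerSeries.C ((k : ℚ) + 1) := by
    simp
  have hsc : (1 / (((k + 1).factorial : ℚ))) * ((k : ℚ) + 1) = 1 / ((k.factorial : ℚ)) := by
    rw [Nat.factorial_succ]
    have h1 : ((k.factorial : ℚ)) ≠ 0 := Nat.cast_ne_zero.mpr (Nat.factorial_ne_zero k)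
    have h2 : ((k : ℚ) + 1) ≠ 0 := by positivity
    push_cast
    field_simp
  rw [h, mul_comm _ (PowerSeries.C ((k : ℚ) + 1)), ← mul_assoc, ← map_mul,
    mul_comm ((k : ℚ) + 1), hsc]

lemma IPQ_coeff : ∀ p, ∀ q, p ≤ q → ∀ k,
    (IPQ p q).coeff k =
      if k ≤ q - p then PowerSeries.C (1 / (k.factorial : ℚ)) * Jaux p (q - p - k) else 0 := by
  intro p
  induction p with
  | zero =>
    intro q _ k
    show (I0S q).coeff k = _
    unfold I0S
    rw [Polynomial.finset_sum_coeff]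
    simp only [Polynomial.coeff_C_mul, Polynomial.coeff_X_pow, mul_ite, mul_one, mul_zero]
    rw [Finset.sum_ite_eq]
    simp only [Finset.mem_range, Nat.lt_succ_iff, Nat.sub_zero]
    rfl
  | succ p ih =>
    intro q hq k
    have hpq : p ≤ q := le_trans (Nat.le_succ p) hq
    have hdiag : (IPQ p p).coeff 0 = Jaux p 0 := by
      rw [ih p le_rfl 0]; simp
    show (deltaOp (IPQ p q * Polynomial.C ((IPQ p p).coeff 0)⁻¹)).coeff k = _
    rw [deltaOp_coeff, Polynomial.coeff_mul_C, Polynomial.coeff_mul_C, hdiag,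
      ih q hpq (k + 1), ih q hpq k]
    by_cases h1 : k + 1 ≤ q - p
    · have h2 : k ≤ q - p := by omega
      have h3 : k ≤ q - (p + 1) := by omega
      rw [if_pos h2, if_pos h1, if_pos h3]
      have e1 : q - p - (k + 1) = q - (p + 1) - k := by omega
      have e2 : q - p - k = q - (p + 1) - k + 1 := by omega
      rw [e1, e2]
      have L1 : PowerSeries.C (1 / (((k + 1).factorial : ℚ))) * Jaux p (q - (p + 1) - k)
            * (Jaux p 0)⁻¹ * ((k : PowerSeries ℚ) + 1)
          = PowerSeries.C (1 / ((k.factorial : ℚ))) * (Jaux p (q - (p + 1) - k)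
            * (Jaux p 0)⁻¹) := by
        rw [mul_assoc (PowerSeries.C _), fact_helper]
      have L2 : zdz (PowerSeries.C (1 / ((k.factorial : ℚ))) * Jaux p (q - (p + 1) - k + 1)
            * (Jaux p 0)⁻¹)
          = PowerSeries.C (1 / ((k.factorial : ℚ)))
            * zdz (Jaux p (q - (p + 1) - k + 1) * (Jaux p 0)⁻¹) := by
        rw [mul_assoc, zdz_C_mul]
      rw [L1, L2, ← mul_add]
      rfl
    · by_cases h2 : k ≤ q - p
      · have hk : q - p - k = 0 := by omega
        have h3 : ¬ k ≤ q - (p + 1) := by omega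
        rw [if_pos h2, if_neg h1, if_neg h3, hk]
        rw [mul_assoc (PowerSeries.C _), zdz_C_mul, Jaux_mul_inv, zdz_one]
        simp
      · have h3 : ¬ k ≤ q - (p + 1) := by omega
        have h4 : ¬ k + 1 ≤ q - p := by omega
        rw [if_neg h2, if_neg h4, if_neg h3]
        simp [zdz_zero]

lemma IPQ_diag (p : ℕ) : IPQ p p = Polynomial.C (Jaux p 0) := by
  apply Polynomial.ext
  intro n
  rw [IPQ_coeff p p le_rfl n, Polynomial.coeff_C]
  by_cases h : n = 0
  · subst h
    simp
  · rw [if_neg h, if_neg (by omega)]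

/-- The recursion defining `I_{p,q}` is well-defined for `0 ≤ p ≤ q ≤ 4`: for every
`0 ≤ p ≤ 4`, the diagonal element `I_{p,p}` lies in `ℚ[[z]] ⊆ S` (it is a constant
polynomial in `t`) with constant coefficient `1`; in particular each `I_{p,p}` is a unit
of `S`, so every division occurring in the recursion is legitimate. -/
theorem IPQ_diagonal_is_unit :
    ∀ p ≤ 4, (∃ f : PowerSeries ℚ, IPQ p p = Polynomial.C f ∧
        PowerSeries.constantCoeff f = 1) ∧ IsUnit (IPQ p p) := by
  intro p _
  refine ⟨⟨Jaux p 0, IPQ_diag p, Jaux_constantCoeff p⟩, ?_⟩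
  rw [IPQ_diag p]
  exact (IsUnit.of_mul_eq_one _ (Jaux_mul_inv p)).map
    (Polynomial.C : PowerSeries ℚ →+* S)
end

section
/- In ℚ[[z]] one has (1 − 729·z) · I_{0,0}² · I_{1,1}² · I_{2,2} = 1; equivalently, log I_{0,0} + log I_{1,1} + (1/2)·log I_{2,2} = −(1/2)·log(1 − 3⁶·z). -/
namespace CubicAux
open PowerSeries
open PowerSeries

lemma coeff_zdz (n : ℕ) (f : PowerSeries ℚ) : coeff n (zdz f) = n * coeff n f :=
  coeff_mk _ _

lemma zdz_add (f g : PowerSeries ℚ) : zdz (f + g) = zdz f + zdz g := by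
  ext n; simp [coeff_zdz, mul_add]

lemma zdz_mul (f g : PowerSeries ℚ) : zdz (f * g) = zdz f * g + f * zdz g := by
  ext n
  simp only [coeff_zdz, map_add, coeff_mul, Finset.mul_sum, ← Finset.sum_add_distrib]
  refine Finset.sum_congr rfl ?_
  intro p hp
  have h := Finset.HasAntidiagonal.mem_antidiagonal.mp hp
  have : (n : ℚ) = (p.1 : ℚ) + p.2 := by exact_mod_cast congrArg (Nat.cast : ℕ → ℚ) h.symm
  rw [this]; ring

lemma zdz_C (r : ℚ) : zdz (C r) = 0 := by
  ext n
  cases n with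
  | zero => simp [coeff_zdz]
  | succ m => simp [coeff_zdz, coeff_C]

lemma zdz_one : zdz 1 = 0 := by rw [← map_one (C (R := ℚ))]; exact zdz_C 1

lemma zdz_ofNat (n : ℕ) [n.AtLeastTwo] :
    zdz (OfNat.ofNat n : PowerSeries ℚ) = 0 := by
  rw [← map_ofNat (C (R := ℚ)) n]; exact zdz_C _

lemma zdz_X : zdz (X : PowerSeries ℚ) = X := by
  ext n
  cases n with
  | zero => simp [coeff_zdz]
  | succ m => simp [coeff_zdz, coeff_X]; split <;> simp_all

lemma zdz_sub (f g : PowerSeries ℚ) : zdz (f - g) = zdz f - zdz g := by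
  ext n; simp [coeff_zdz, mul_sub]

lemma zdz_neg (f : PowerSeries ℚ) : zdz (-f) = - zdz f := by
  ext n; simp [coeff_zdz]

lemma constantCoeff_zdz (f : PowerSeries ℚ) : constantCoeff (zdz f) = 0 := by
  rw [← coeff_zero_eq_constantCoeff_apply, coeff_zdz]; simp

open PowerSeries

noncomputable def Nd (d : ℕ) : PowerSeries ℚ := ∏ r ∈ Finset.Icc 1 d, (3 * X + (r : PowerSeries ℚ))
noncomputable def Dd (d : ℕ) : PowerSeries ℚ := ∏ r ∈ Finset.Icc 1 d, (X + (r : PowerSeries ℚ))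

lemma Acoef_eq (d : ℕ) : Acoef d = Nd (3 * d) ^ 2 * ((Dd d ^ 6)⁻¹) := rfl

lemma constCoeff_Dd (d : ℕ) : constantCoeff (Dd d) = ∏ r ∈ Finset.Icc 1 d, (r : ℚ) := by
  rw [Dd, map_prod]
  refine Finset.prod_congr rfl fun r _ => by simp

lemma Dd_pow_ne (d : ℕ) : constantCoeff (Dd d ^ 6) ≠ 0 := by
  rw [map_pow, constCoeff_Dd]
  apply pow_ne_zero
  apply Finset.prod_ne_zero_iff.mpr
  intro r hr
  have : 1 ≤ r := (Finset.mem_Icc.mp hr).1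
  exact Nat.cast_ne_zero.mpr (by omega)


lemma Dd_inv_cancel (d : ℕ) : (Dd d ^ 6)⁻¹ * Dd d ^ 6 = 1 :=
  PowerSeries.inv_mul_cancel _ (Dd_pow_ne d)

lemma Dd_succ (d : ℕ) : Dd (d + 1) = Dd d * (X + ((d + 1 : ℕ) : PowerSeries ℚ)) := by
  rw [Dd, Dd, Finset.prod_Icc_succ_top (by omega)]

lemma Nd_succ (d : ℕ) : Nd (d + 1) = Nd d * (3 * X + ((d + 1 : ℕ) : PowerSeries ℚ)) := by
  rw [Nd, Nd, Finset.prod_Icc_succ_top (by omega)]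

lemma A_rec (d : ℕ) :
    (X + ((d:PowerSeries ℚ) + 1)) * ((X + ((d:PowerSeries ℚ)+1)) * ((X + ((d:PowerSeries ℚ)+1)) *
      ((X + ((d:PowerSeries ℚ)+1)) * Acoef (d+1)))) =
    9 * ((3*X + (3*(d:PowerSeries ℚ)+1)) * ((3*X + (3*(d:PowerSeries ℚ)+1)) *
      ((3*X + (3*(d:PowerSeries ℚ)+2)) * ((3*X + (3*(d:PowerSeries ℚ)+2)) * Acoef d)))) := by
  have hD : Dd (d+1) ^ 6 ≠ 0 := fun h => Dd_pow_ne (d+1) (by rw [h]; simp)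
  apply mul_right_cancel₀ hD
  have key : ∀ e : ℕ, Acoef e * Dd e ^ 6 = Nd (3*e) ^ 2 := fun e => by
    rw [Acoef_eq, mul_assoc, Dd_inv_cancel, mul_one]
  set u : PowerSeries ℚ := X + ((d:PowerSeries ℚ) + 1) with hu
  set sf : PowerSeries ℚ := 3*X + (3*(d:PowerSeries ℚ)+1) with hs
  set tf : PowerSeries ℚ := 3*X + (3*(d:PowerSeries ℚ)+2) with ht
  have e1 : Nd (3*(d+1)) = Nd (3*d) * sf * tf * (3 * u) := by
    rw [show 3*(d+1) = (3*d+2)+1 by ring, Nd_succ, show (3*d+2)+1 = 3*d+3 by ring,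
      show (3*d+2 : ℕ) = (3*d+1)+1 by ring, Nd_succ, show (3*d+1)+1 = 3*d+2 by ring,
      show (3*d+1 : ℕ) = (3*d)+1 by ring, Nd_succ, hu, hs, ht]
    push_cast
    ring
  have e2 : Dd (d+1) = Dd d * u := by
    rw [Dd_succ, hu]; push_cast; ring
  calc u * (u * (u * (u * Acoef (d+1)))) * Dd (d+1) ^ 6
      = u^4 * (Acoef (d+1) * Dd (d+1) ^ 6) := by ring
    _ = u^4 * Nd (3*(d+1)) ^ 2 := by rw [key]
    _ = 9 * (sf * (sf * (tf * (tf * Nd (3*d) ^ 2)))) * u^6 := by rw [e1]; ring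
    _ = 9 * (sf * (sf * (tf * (tf * (Acoef d * Dd d ^ 6))))) * u^6 := by rw [key]
    _ = 9 * (sf * (sf * (tf * (tf * Acoef d)))) * Dd (d+1) ^ 6 := by rw [e2]; ring


lemma coeff_X_mul_zero (G : PowerSeries ℚ) : coeff 0 (X * G) = 0 := by
  rw [coeff_zero_eq_constantCoeff_apply, map_mul, constantCoeff_X, zero_mul]

lemma coe0 (v : ℚ) (G : PowerSeries ℚ) :
    coeff 0 ((X + C v) * G) = v * coeff 0 G := by
  rw [add_mul, map_add, coeff_X_mul_zero, coeff_C_mul, zero_add]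

lemma coeS (q : ℕ) (v : ℚ) (G : PowerSeries ℚ) :
    coeff (q+1) ((X + C v) * G) = coeff q G + v * coeff (q+1) G := by
  rw [add_mul, map_add, coeff_succ_X_mul, coeff_C_mul]

lemma coe1 (v : ℚ) (G : PowerSeries ℚ) :
    coeff 1 ((X + C v) * G) = coeff 0 G + v * coeff 1 G := coeS 0 v G

lemma coe2 (v : ℚ) (G : PowerSeries ℚ) :
    coeff 2 ((X + C v) * G) = coeff 1 G + v * coeff 2 G := coeS 1 v G

lemma coe0' (v : ℚ) (G : PowerSeries ℚ) :
    coeff 0 ((3 * X + C v) * G) = v * coeff 0 G := by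
  rw [show ((3:PowerSeries ℚ) * X + C v) * G = C 3 * (X * G) + C v * G by
    rw [map_ofNat (C (R := ℚ)) 3]; ring]
  rw [map_add, coeff_C_mul, coeff_C_mul, coeff_X_mul_zero, mul_zero, zero_add]

lemma coeS' (q : ℕ) (v : ℚ) (G : PowerSeries ℚ) :
    coeff (q+1) ((3 * X + C v) * G) = 3 * coeff q G + v * coeff (q+1) G := by
  rw [show ((3:PowerSeries ℚ) * X + C v) * G = C 3 * (X * G) + C v * G by
    rw [map_ofNat (C (R := ℚ)) 3]; ring]
  rw [map_add, coeff_C_mul, coeff_C_mul, coeff_succ_X_mul]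

lemma coe1' (v : ℚ) (G : PowerSeries ℚ) :
    coeff 1 ((3 * X + C v) * G) = 3 * coeff 0 G + v * coeff 1 G := coeS' 0 v G

lemma coe2' (v : ℚ) (G : PowerSeries ℚ) :
    coeff 2 ((3 * X + C v) * G) = 3 * coeff 1 G + v * coeff 2 G := coeS' 1 v G

lemma coe9 (n : ℕ) (G : PowerSeries ℚ) :
    coeff n ((9 : PowerSeries ℚ) * G) = 9 * coeff n G := by
  rw [← map_ofNat (C (R := ℚ)) 9, coeff_C_mul]

/-- C-form of the recurrence. -/
lemma A_recC (d : ℕ) :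
    (X + C ((d:ℚ) + 1)) * ((X + C ((d:ℚ)+1)) * ((X + C ((d:ℚ)+1)) *
      ((X + C ((d:ℚ)+1)) * Acoef (d+1)))) =
    9 * ((3*X + C (3*(d:ℚ)+1)) * ((3*X + C (3*(d:ℚ)+1)) *
      ((3*X + C (3*(d:ℚ)+2)) * ((3*X + C (3*(d:ℚ)+2)) * Acoef d)))) := by
  have h := A_rec d
  have b1 : C ((d:ℚ) + 1) = (d : PowerSeries ℚ) + 1 := by
    rw [map_add, map_natCast, map_one]
  have b2 : C (3*(d:ℚ) + 1) = 3 * (d : PowerSeries ℚ) + 1 := by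
    rw [map_add, map_mul, map_natCast, map_one, map_ofNat]
  have b3 : C (3*(d:ℚ) + 2) = 3 * (d : PowerSeries ℚ) + 2 := by
    rw [map_add, map_mul, map_natCast, map_ofNat, map_ofNat]
  rw [b1, b2, b3]
  exact h

noncomputable def al (q d : ℕ) : ℚ := coeff q (Acoef d)

lemma E0 (d : ℕ) : ((d:ℚ)+1)^4 * al 0 (d+1) = 9*(3*(d:ℚ)+1)^2*(3*(d:ℚ)+2)^2 * al 0 d := by
  have h := congrArg (coeff 0) (A_recC d)
  simp only [coe0, coe0', coe9] at h
  unfold al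
  linear_combination h

lemma E1 (d : ℕ) : ((d:ℚ)+1)^4 * al 1 (d+1) + 4*((d:ℚ)+1)^3 * al 0 (d+1) =
    9*(3*(d:ℚ)+1)^2*(3*(d:ℚ)+2)^2 * al 1 d
      + 54*(3*(d:ℚ)+1)*(3*(d:ℚ)+2)*(6*(d:ℚ)+3) * al 0 d := by
  have h := congrArg (coeff 1) (A_recC d)
  simp only [coe0, coe1, coe0', coe1', coe9] at h
  unfold al
  linear_combination h

lemma E2 (d : ℕ) : ((d:ℚ)+1)^4 * al 2 (d+1) + 4*((d:ℚ)+1)^3 * al 1 (d+1)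
      + 6*((d:ℚ)+1)^2 * al 0 (d+1) =
    9*(3*(d:ℚ)+1)^2*(3*(d:ℚ)+2)^2 * al 2 d
      + 54*(3*(d:ℚ)+1)*(3*(d:ℚ)+2)*(6*(d:ℚ)+3) * al 1 d
      + 81*((3*(d:ℚ)+1)^2 + 4*(3*(d:ℚ)+1)*(3*(d:ℚ)+2) + (3*(d:ℚ)+2)^2) * al 0 d := by
  have h := congrArg (coeff 2) (A_recC d)
  simp only [coe0, coe1, coe2, coe0', coe1', coe2', coe9] at h
  unfold al
  linear_combination h

lemma coeff_Itil (q n : ℕ) : coeff n (Itil q) = al q n := coeff_mk _ _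

noncomputable def R0 : ℕ → PowerSeries ℚ
  | 0 => Itil 0
  | k+1 => zdz (R0 k)

noncomputable def R1 : ℕ → PowerSeries ℚ
  | 0 => Itil 1
  | k+1 => zdz (R1 k) + R0 k

noncomputable def R2 : ℕ → PowerSeries ℚ
  | 0 => Itil 2
  | k+1 => zdz (R2 k) + R1 k

lemma zdzR0 (k : ℕ) : zdz (R0 k) = R0 (k+1) := rfl
lemma zdzR1 (k : ℕ) : zdz (R1 k) = R1 (k+1) - R0 k := by rw [show R1 (k+1) = zdz (R1 k) + R0 k from rfl]; ring
lemma zdzR2 (k : ℕ) : zdz (R2 k) = R2 (k+1) - R1 k := by rw [show R2 (k+1) = zdz (R2 k) + R1 k from rfl]; ring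

lemma Rlem0 : (1 - 729 * X) * R0 4 =
    1458 * (X * R0 3) + 1053 * (X * R0 2) + 324 * (X * R0 1) + 36 * (X * R0 0) := by
  have hnum : ∀ (m : ℕ) (f : PowerSeries ℚ) (n : ℕ), [m.AtLeastTwo] →
      coeff n ((OfNat.ofNat m : PowerSeries ℚ) * f) = OfNat.ofNat m * coeff n f := by
    intro m f n _
    rw [← map_ofNat (C (R := ℚ)) m, coeff_C_mul]
  ext n
  cases n with
  | zero =>
    simp only [R0, map_sub, map_add, one_mul, sub_mul]
    rw [show ((729:PowerSeries ℚ) * X) * zdz (zdz (zdz (zdz (Itil 0)))) =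
      (729:PowerSeries ℚ) * (X * zdz (zdz (zdz (zdz (Itil 0))))) by ring]
    rw [hnum, hnum, hnum, hnum, hnum]
    simp [coeff_zdz, coeff_X_mul_zero]
  | succ d =>
    simp only [R0, map_sub, map_add, one_mul, sub_mul]
    rw [show ((729:PowerSeries ℚ) * X) * zdz (zdz (zdz (zdz (Itil 0)))) =
      (729:PowerSeries ℚ) * (X * zdz (zdz (zdz (zdz (Itil 0))))) by ring]
    rw [hnum, hnum, hnum, hnum, hnum]
    simp only [coeff_succ_X_mul, coeff_zdz, coeff_Itil]
    push_cast
    linear_combination E0 d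

lemma coeNum (m : ℕ) [m.AtLeastTwo] (f : PowerSeries ℚ) (n : ℕ) :
    coeff n ((OfNat.ofNat m : PowerSeries ℚ) * f) = OfNat.ofNat m * coeff n f := by
  rw [← map_ofNat (C (R := ℚ)) m, coeff_C_mul]

lemma Lshape (n : ℕ) (f : PowerSeries ℚ) :
    coeff n ((1 - 729*X) * f) = coeff n f - 729 * coeff n (X*f) := by
  rw [sub_mul, one_mul, map_sub, show (729:PowerSeries ℚ)*X*f = 729*(X*f) by ring, coeNum]

lemma coe36 (f : PowerSeries ℚ) (n : ℕ) :
    coeff n ((36:PowerSeries ℚ) * f) = 36 * coeff n f := coeNum 36 f n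
lemma coe324 (f : PowerSeries ℚ) (n : ℕ) :
    coeff n ((324:PowerSeries ℚ) * f) = 324 * coeff n f := coeNum 324 f n
lemma coe729 (f : PowerSeries ℚ) (n : ℕ) :
    coeff n ((729:PowerSeries ℚ) * f) = 729 * coeff n f := coeNum 729 f n
lemma coe1053 (f : PowerSeries ℚ) (n : ℕ) :
    coeff n ((1053:PowerSeries ℚ) * f) = 1053 * coeff n f := coeNum 1053 f n
lemma coe1458 (f : PowerSeries ℚ) (n : ℕ) :
    coeff n ((1458:PowerSeries ℚ) * f) = 1458 * coeff n f := coeNum 1458 f n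

lemma Rlem1 : (1 - 729 * X) * R1 4 =
    1458 * (X * R1 3) + 1053 * (X * R1 2) + 324 * (X * R1 1) + 36 * (X * R1 0) := by
  ext n
  rw [Lshape]
  cases n with
  | zero =>
    simp [coe36, coe324, coe1053, coe1458, coeff_X_mul_zero, R1, R0, coeff_zdz, map_add]
  | succ d =>
    simp only [map_add, coe36, coe324, coe1053, coe1458, coeff_succ_X_mul, R1, R0, coeff_zdz, coeff_Itil, map_sub]
    push_cast
    linear_combination E1 d

lemma Rlem2 : (1 - 729 * X) * R2 4 =
    1458 * (X * R2 3) + 1053 * (X * R2 2) + 324 * (X * R2 1) + 36 * (X * R2 0) := by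
  ext n
  rw [Lshape]
  cases n with
  | zero =>
    simp [coe36, coe324, coe1053, coe1458, coeff_X_mul_zero, R2, R1, R0, coeff_zdz, map_add]
  | succ d =>
    simp only [map_add, coe36, coe324, coe1053, coe1458, coeff_succ_X_mul, R2, R1, R0, coeff_zdz, coeff_Itil, map_sub]
    push_cast
    linear_combination E2 d

lemma Rlem0' : (1 - 729 * X) * R0 4 =
    1458 * (X * R0 3) + 1053 * (X * R0 2) + 324 * (X * R0 1) + 36 * (X * R0 0) := Rlem0

noncomputable def dd (i j k : ℕ) : PowerSeries ℚ :=
  R0 i * (R1 j * R2 k - R1 k * R2 j) - R1 i * (R0 j * R2 k - R0 k * R2 j)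
    + R2 i * (R0 j * R1 k - R0 k * R1 j)

lemma hS1 : zdz (dd 0 1 2) = dd 0 1 3 := by
  unfold dd
  simp only [zdz_add, zdz_sub, zdz_mul, zdzR0, zdzR1, zdzR2, Nat.reduceAdd]
  ring

lemma hS2' : zdz (dd 0 1 3) = dd 0 2 3 + dd 0 1 4 := by
  unfold dd
  simp only [zdz_add, zdz_sub, zdz_mul, zdzR0, zdzR1, zdzR2, Nat.reduceAdd]
  ring

lemma hS3' : zdz (dd 0 2 3) = dd 1 2 3 + dd 0 2 4 := by
  unfold dd
  simp only [zdz_add, zdz_sub, zdz_mul, zdzR0, zdzR1, zdzR2, Nat.reduceAdd]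
  ring

lemma hS4' : zdz (dd 1 2 3) = dd 1 2 4 := by
  unfold dd
  simp only [zdz_add, zdz_sub, zdz_mul, zdzR0, zdzR1, zdzR2, Nat.reduceAdd]
  ring

lemma S2 : (1 - 729*X) * zdz (dd 0 1 3) =
    (1 - 729*X) * dd 0 2 3 + 1458*(X*dd 0 1 3) + 1053*(X*dd 0 1 2) := by
  rw [hS2']; unfold dd
  linear_combination (R1 0*R2 1 - R2 0*R1 1) * Rlem0 + (R2 0*R0 1 - R0 0*R2 1) * Rlem1
    + (R0 0*R1 1 - R1 0*R0 1) * Rlem2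

lemma S3 : (1 - 729*X) * zdz (dd 0 2 3) =
    (1 - 729*X) * dd 1 2 3 + 1458*(X*dd 0 2 3) - 324*(X*dd 0 1 2) := by
  rw [hS3']; unfold dd
  linear_combination (R1 0*R2 2 - R2 0*R1 2) * Rlem0 + (R2 0*R0 2 - R0 0*R2 2) * Rlem1
    + (R0 0*R1 2 - R1 0*R0 2) * Rlem2

lemma S4 : (1 - 729*X) * zdz (dd 1 2 3) =
    1458*(X*dd 1 2 3) + 36*(X*dd 0 1 2) := by
  rw [hS4']; unfold dd
  linear_combination (R1 1*R2 2 - R2 1*R1 2) * Rlem0 + (R2 1*R0 2 - R0 1*R2 2) * Rlem1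
    + (R0 1*R1 2 - R1 1*R0 2) * Rlem2

lemma zdz324 : zdz (324 : PowerSeries ℚ) = 0 := zdz_ofNat 324
lemma zdz729 : zdz (729 : PowerSeries ℚ) = 0 := zdz_ofNat 729

noncomputable def TT : PowerSeries ℚ := (1 - 729*X) * dd 0 1 2

lemma hzg : zdz ((1:PowerSeries ℚ) - 729*X) = -(729*X) := by
  rw [zdz_sub, zdz_one, zdz_mul, zdz729, zdz_X]; ring

lemma T1 : zdz TT = -(729*X)*dd 0 1 2 + (1 - 729*X)*dd 0 1 3 := by
  unfold TT
  rw [zdz_mul, hzg, hS1]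

lemma T2 : zdz (zdz TT) = 324*(X*dd 0 1 2) + (1 - 729*X)*dd 0 2 3 := by
  rw [T1]
  simp only [zdz_add, zdz_mul, zdz_neg, zdz_sub, zdz_one, zdz729, zdz_X]
  rw [hS1]
  linear_combination S2

lemma T3 : zdz (zdz (zdz TT)) =
    324*(X*dd 0 1 3) + 729*(X*dd 0 2 3) + (1 - 729*X)*dd 1 2 3 := by
  rw [T2]
  simp only [zdz_add, zdz_mul, zdz_sub, zdz_one, zdz324, zdz729, zdz_X]
  rw [hS1]
  linear_combination S3

lemma Lfinal : (1 - 729*X) * zdz (zdz (zdz (zdz TT))) =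
    1458*(X*zdz (zdz (zdz TT))) + 1053*(X*zdz (zdz TT)) + 324*(X*zdz TT) + 36*(X*TT) := by
  rw [T3, T2, T1]
  unfold TT
  simp only [zdz_add, zdz_mul, zdz_sub, zdz_one, zdz324, zdz729, zdz_X]
  linear_combination (324*X)*S2 + (729*X)*S3 + (1 - 729*X)*S4

lemma Acoef_zero : Acoef 0 = 1 := by
  unfold Acoef
  rw [show Finset.Icc 1 (3*0) = ∅ by rfl]
  rw [Finset.prod_empty, Finset.prod_empty, one_pow, one_pow]
  have h1 : (1 : PowerSeries ℚ) * (1 : PowerSeries ℚ)⁻¹ = 1 :=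
    PowerSeries.mul_inv_cancel _ (by simp)
  rw [one_mul] at h1
  rw [h1, mul_one]

lemma al00 : al 0 0 = 1 := by unfold al; rw [Acoef_zero]; simp
lemma al10 : al 1 0 = 0 := by unfold al; rw [Acoef_zero]; simp [coeff_one]
lemma al20 : al 2 0 = 0 := by unfold al; rw [Acoef_zero]; simp [coeff_one]

lemma cItil0 : constantCoeff (Itil 0) = 1 := by
  rw [← coeff_zero_eq_constantCoeff_apply, coeff_Itil]; exact al00
lemma cItil1 : constantCoeff (Itil 1) = 0 := by
  rw [← coeff_zero_eq_constantCoeff_apply, coeff_Itil]; exact al10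
lemma cItil2 : constantCoeff (Itil 2) = 0 := by
  rw [← coeff_zero_eq_constantCoeff_apply, coeff_Itil]; exact al20

lemma Teq : TT = Itil 0 := by
  ext n
  induction n with
  | zero =>
    rw [coeff_zero_eq_constantCoeff_apply, coeff_zero_eq_constantCoeff_apply]
    unfold TT dd
    simp [map_mul, map_add, map_sub, R0, R1, R2, constantCoeff_zdz, cItil0, cItil1, cItil2]
  | succ d ih =>
    have h := congrArg (coeff (d+1)) Lfinal
    rw [Lshape] at h
    simp only [map_add, coe1458, coe1053, coe324, coe36, coeff_succ_X_mul, coeff_zdz] at h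
    rw [coeff_Itil] at ih ⊢
    have hne : ((d:ℚ)+1)^4 ≠ 0 := by positivity
    have key : ((d:ℚ)+1)^4 * coeff (d+1) TT = ((d:ℚ)+1)^4 * al 0 (d+1) := by
      push_cast at h ⊢
      linear_combination h + (729*(d:ℚ)^4+1458*(d:ℚ)^3+1053*(d:ℚ)^2+324*(d:ℚ)+36)*ih - E0 d
    exact mul_left_cancel₀ hne key

noncomputable def uu1 : PowerSeries ℚ := Itil 1 * (Itil 0)⁻¹
noncomputable def uu2 : PowerSeries ℚ := Itil 2 * (Itil 0)⁻¹
noncomputable def aa : PowerSeries ℚ := 1 + zdz uu1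
noncomputable def ccq : PowerSeries ℚ := (uu1 + zdz uu2) * aa⁻¹
noncomputable def bb : PowerSeries ℚ := 1 + zdz ccq

lemma hy0inv : Itil 0 * (Itil 0)⁻¹ = 1 :=
  PowerSeries.mul_inv_cancel _ (by rw [cItil0]; norm_num)

lemma hu1 : Itil 0 * uu1 = Itil 1 := by unfold uu1; linear_combination Itil 1 * hy0inv
lemma hu2 : Itil 0 * uu2 = Itil 2 := by unfold uu2; linear_combination Itil 2 * hy0inv

lemma caa : constantCoeff aa = 1 := by
  unfold aa; rw [map_add, map_one, constantCoeff_zdz, add_zero]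

lemma haainv : aa * aa⁻¹ = 1 :=
  PowerSeries.mul_inv_cancel _ (by rw [caa]; norm_num)

lemma hcc : aa * ccq = uu1 + zdz uu2 := by
  unfold ccq; linear_combination (uu1 + zdz uu2) * haainv

lemma hzc : (1 + zdz uu1) * ((1 + zdz uu1) * zdz ccq) =
    (1 + zdz uu1) * (zdz uu1 + zdz (zdz uu2)) - zdz (zdz uu1) * (uu1 + zdz uu2) := by
  have h1 : zdz aa * ccq + aa * zdz ccq = zdz uu1 + zdz (zdz uu2) := by
    have h := congrArg zdz hcc
    rwa [zdz_mul, zdz_add] at h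
  have h2 : zdz aa = zdz (zdz uu1) := by
    unfold aa; rw [zdz_add, zdz_one, zero_add]
  have h3 : aa = 1 + zdz uu1 := rfl
  rw [← h3, ← h2]
  linear_combination aa * h1 - zdz aa * hcc

lemma F1 : dd 0 1 2 = Itil 0 * ((Itil 0)^2 * (aa^2 * bb)) := by
  unfold dd bb aa
  simp only [R0, R1, R2]
  rw [← hu1, ← hu2]
  simp only [zdz_mul, zdz_add]
  linear_combination (-(Itil 0)^3) * hzc

lemma mainPS : (1 - 729*X) * (Itil 0)^2 * aa^2 * bb = 1 := by
  have hne : (Itil 0) ≠ 0 := fun h => one_ne_zero (by rw [← cItil0, h, map_zero])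
  apply mul_left_cancel₀ hne
  calc Itil 0 * ((1 - 729*X) * (Itil 0)^2 * aa^2 * bb)
      = (1 - 729*X) * (Itil 0 * ((Itil 0)^2 * (aa^2 * bb))) := by ring
    _ = (1 - 729*X) * dd 0 1 2 := by rw [← F1]
    _ = Itil 0 := by rw [show (1 - 729*X) * dd 0 1 2 = TT from rfl, Teq]
    _ = Itil 0 * 1 := (mul_one _).symm

lemma zdz_zero : zdz 0 = 0 := by
  ext n; simp [coeff_zdz]

lemma deltaOp_add (p q : S) : deltaOp (p + q) = deltaOp p + deltaOp q := by
  unfold deltaOp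
  rw [Polynomial.derivative_add, Polynomial.sum_add_index]
  · ring
  · intro n; rw [zdz_zero, map_zero, zero_mul]
  · intro n a b; rw [zdz_add, map_add, add_mul]

lemma dmon (f : PowerSeries ℚ) (n : ℕ) :
    deltaOp (Polynomial.C f * Polynomial.X ^ n) =
      Polynomial.C (f * n) * Polynomial.X ^ (n-1) + Polynomial.C (zdz f) * Polynomial.X ^ n := by
  unfold deltaOp
  rw [Polynomial.C_mul_X_pow_eq_monomial, Polynomial.derivative_monomial,
    Polynomial.sum_monomial_index, ← Polynomial.C_mul_X_pow_eq_monomial]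
  rw [zdz_zero, map_zero, zero_mul]

lemma dC (f : PowerSeries ℚ) : deltaOp (Polynomial.C f) = Polynomial.C (zdz f) := by
  have h := dmon f 0
  simpa using h

lemma dCX (f : PowerSeries ℚ) :
    deltaOp (Polynomial.C f * Polynomial.X) =
      Polynomial.C f + Polynomial.C (zdz f) * Polynomial.X := by
  have h := dmon f 1
  simpa using h

lemma dCX2 (f : PowerSeries ℚ) :
    deltaOp (Polynomial.C f * Polynomial.X ^ 2) =
      Polynomial.C (f * 2) * Polynomial.X + Polynomial.C (zdz f) * Polynomial.X ^ 2 := by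
  have h := dmon f 2
  simpa using h

lemma I0S0 : I0S 0 = Polynomial.C (Itil 0) := by
  unfold I0S
  rw [Finset.sum_range_one]
  norm_num

lemma I0S1 : I0S 1 = Polynomial.C (Itil 1) + Polynomial.C (Itil 0) * Polynomial.X := by
  unfold I0S
  rw [Finset.sum_range_succ, Finset.sum_range_one]
  norm_num

lemma I0S2 : I0S 2 = Polynomial.C (Itil 2) + Polynomial.C (Itil 1) * Polynomial.X
    + Polynomial.C (PowerSeries.C (1/2) * Itil 0) * Polynomial.X ^ 2 := by
  unfold I0S
  rw [Finset.sum_range_succ, Finset.sum_range_succ, Finset.sum_range_one]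
  norm_num [Nat.factorial]

lemma IPQ00 : IPQ 0 0 = Polynomial.C (Itil 0) := I0S0

lemma IPQ11 : IPQ 1 1 = Polynomial.C aa := by
  have h0 : ((IPQ 0 0).coeff 0)⁻¹ = (Itil 0)⁻¹ := by rw [IPQ00, Polynomial.coeff_C_zero]
  have : IPQ 1 1 = deltaOp (I0S 1 * Polynomial.C ((Itil 0)⁻¹)) := by
    rw [show IPQ 1 1 = deltaOp (IPQ 0 1 * Polynomial.C (((IPQ 0 0).coeff 0)⁻¹)) from rfl, h0]
    rfl
  rw [this, I0S1]
  have e : (Polynomial.C (Itil 1) + Polynomial.C (Itil 0) * Polynomial.X) * Polynomial.C ((Itil 0)⁻¹)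
      = Polynomial.C uu1 + Polynomial.C (1 : PowerSeries ℚ) * Polynomial.X := by
    rw [show (Polynomial.C (Itil 1) + Polynomial.C (Itil 0) * Polynomial.X) * Polynomial.C ((Itil 0)⁻¹)
        = Polynomial.C (Itil 1 * (Itil 0)⁻¹) + Polynomial.C (Itil 0 * (Itil 0)⁻¹) * Polynomial.X by
      rw [map_mul, map_mul]; ring]
    rw [hy0inv]
    rfl
  rw [e, deltaOp_add, dC, dCX]
  rw [zdz_one, map_zero, zero_mul, add_zero]
  simp only [show aa = 1 + zdz uu1 from rfl, map_add, map_one]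
  ring

lemma IPQ12 : IPQ 1 2 = Polynomial.C (uu1 + zdz uu2) + Polynomial.C aa * Polynomial.X := by
  have h0 : ((IPQ 0 0).coeff 0)⁻¹ = (Itil 0)⁻¹ := by rw [IPQ00, Polynomial.coeff_C_zero]
  have : IPQ 1 2 = deltaOp (I0S 2 * Polynomial.C ((Itil 0)⁻¹)) := by
    rw [show IPQ 1 2 = deltaOp (IPQ 0 2 * Polynomial.C (((IPQ 0 0).coeff 0)⁻¹)) from rfl, h0]
    rfl
  rw [this, I0S2]
  have e : (Polynomial.C (Itil 2) + Polynomial.C (Itil 1) * Polynomial.X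
      + Polynomial.C (PowerSeries.C (1/2) * Itil 0) * Polynomial.X ^ 2) * Polynomial.C ((Itil 0)⁻¹)
      = Polynomial.C uu2 + Polynomial.C uu1 * Polynomial.X
        + Polynomial.C (PowerSeries.C (1/2)) * Polynomial.X ^ 2 := by
    rw [show (Polynomial.C (Itil 2) + Polynomial.C (Itil 1) * Polynomial.X
      + Polynomial.C (PowerSeries.C (1/2) * Itil 0) * Polynomial.X ^ 2) * Polynomial.C ((Itil 0)⁻¹)
        = Polynomial.C (Itil 2 * (Itil 0)⁻¹) + Polynomial.C (Itil 1 * (Itil 0)⁻¹) * Polynomial.X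
          + Polynomial.C (PowerSeries.C (1/2) * (Itil 0 * (Itil 0)⁻¹)) * Polynomial.X ^ 2 by
      simp only [map_mul]; ring]
    rw [hy0inv, mul_one]
    rfl
  rw [e, deltaOp_add, deltaOp_add, dC, dCX, dCX2]
  rw [zdz_C, map_zero, zero_mul, add_zero]
  have h2 : Polynomial.C (PowerSeries.C (1/2) * 2) = (1 : S) := by
    rw [show (PowerSeries.C (1/2) * 2 : PowerSeries ℚ) = 1 by
      rw [← map_ofNat (PowerSeries.C (R := ℚ)) 2, ← map_mul]; norm_num]
    exact map_one _
  rw [h2]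
  simp only [show aa = 1 + zdz uu1 from rfl, map_add, map_one]
  ring

lemma IPQ22 : IPQ 2 2 = Polynomial.C bb := by
  have h0 : ((IPQ 1 1).coeff 0)⁻¹ = aa⁻¹ := by rw [IPQ11, Polynomial.coeff_C_zero]
  have : IPQ 2 2 = deltaOp (IPQ 1 2 * Polynomial.C (aa⁻¹)) := by
    rw [show IPQ 2 2 = deltaOp (IPQ 1 2 * Polynomial.C (((IPQ 1 1).coeff 0)⁻¹)) from rfl, h0]
  rw [this, IPQ12]
  have e : (Polynomial.C (uu1 + zdz uu2) + Polynomial.C aa * Polynomial.X) * Polynomial.C (aa⁻¹)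
      = Polynomial.C ccq + Polynomial.C (1 : PowerSeries ℚ) * Polynomial.X := by
    rw [show (Polynomial.C (uu1 + zdz uu2) + Polynomial.C aa * Polynomial.X) * Polynomial.C (aa⁻¹)
        = Polynomial.C ((uu1 + zdz uu2) * aa⁻¹) + Polynomial.C (aa * aa⁻¹) * Polynomial.X by
      rw [map_mul, map_mul]; ring]
    rw [haainv]
    rfl
  rw [e, deltaOp_add, dC, dCX]
  rw [zdz_one, map_zero, zero_mul, add_zero]
  simp only [show bb = 1 + zdz ccq from rfl, map_add, map_one]
  ring

end CubicAux

/-- The identity `(1 − 729·z)·I_{0,0}²·I_{1,1}²·I_{2,2} = 1`; equivalently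
`log I_{0,0} + log I_{1,1} + (1/2)·log I_{2,2} = −(1/2)·log(1 − 3⁶·z)`. -/
theorem IPQ_squared_product_identity :
    (1 - 729 * Polynomial.C (PowerSeries.X : PowerSeries ℚ)) *
      (IPQ 0 0) ^ 2 * (IPQ 1 1) ^ 2 * IPQ 2 2 = 1 := by
  rw [CubicAux.IPQ00, CubicAux.IPQ11, CubicAux.IPQ22]
  have h : Polynomial.C ((1 : PowerSeries ℚ) - 729 * PowerSeries.X)
      = 1 - 729 * Polynomial.C (PowerSeries.X : PowerSeries ℚ) := by
    rw [map_sub, map_one, map_mul, map_ofNat]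
  rw [← h, ← map_pow, ← map_pow, ← map_mul, ← map_mul, ← map_mul, CubicAux.mainPS, map_one]
end
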